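/- With A = (a_{ij}) ∈ ℝ^{d×d} antisymmetric and R = (r_{ij}) ∈ ℝ^{k×d}, the balanced operator P^bal(w_a, w_r) = (skew((4α−1)w_a A + √α Rᵀ w_r), α w_r A − √α R w_a) on ℝ^{d×d} × ℝ^{k×d}, viewed as a linear operator on ℝ^{(d+k)d} via the standard entrywise basis, has 1-norm (maximum over basis vectors of the entrywise 1-norm of the image) bounded by max(n_A, n_R), where n_A = max_j (√α Σ_{i=1}^k |r_{ij}| + |4α−1|·‖A‖₁) and n_R = max_j (α Σ_i |a_{ij}| + √α ‖R‖_∞); here ‖A‖₁ is the maximum column sum of absolute entries and ‖R‖_∞ the maximum row sum of absolute entries. -/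

import Mathlib

open Matrix

/-- The skew part of a square matrix, `(M − Mᵀ)/2`. -/
noncomputable def mskew {d : ℕ} (M : Matrix (Fin d) (Fin d) ℝ) :
    Matrix (Fin d) (Fin d) ℝ := (1/2 : ℝ) • (M - Mᵀ)

/-- The balanced Stiefel transport operator
`P^bal(w_a, w_r) = (skew((4α−1)w_a A + √α Rᵀ w_r), α w_r A − √α R w_a)`. -/
noncomputable def stiefelPbal {d k : ℕ} (α : ℝ) (A : Matrix (Fin d) (Fin d) ℝ)
    (R : Matrix (Fin k) (Fin d) ℝ)
    (w : Matrix (Fin d) (Fin d) ℝ × Matrix (Fin k) (Fin d) ℝ) :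
    Matrix (Fin d) (Fin d) ℝ × Matrix (Fin k) (Fin d) ℝ :=
  (mskew ((4 * α - 1) • (w.1 * A) + Real.sqrt α • (Rᵀ * w.2)),
    α • (w.2 * A) - Real.sqrt α • (R * w.1))

/-- The entrywise 1-norm of a pair of matrices. -/
noncomputable def pairOneNorm {d k : ℕ}
    (w : Matrix (Fin d) (Fin d) ℝ × Matrix (Fin k) (Fin d) ℝ) : ℝ :=
  (∑ i, ∑ j, |w.1 i j|) + ∑ i, ∑ j, |w.2 i j|

noncomputable def entSum {m n : ℕ} (M : Matrix (Fin m) (Fin n) ℝ) : ℝ :=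
  ∑ i, ∑ j, |M i j|

lemma entSum_add {m n : ℕ} (X Y : Matrix (Fin m) (Fin n) ℝ) :
    entSum (X + Y) ≤ entSum X + entSum Y := by
  unfold entSum
  rw [← Finset.sum_add_distrib]
  refine Finset.sum_le_sum fun i _ => ?_
  rw [← Finset.sum_add_distrib]
  exact Finset.sum_le_sum fun j _ => abs_add_le _ _

lemma entSum_smul {m n : ℕ} (c : ℝ) (X : Matrix (Fin m) (Fin n) ℝ) :
    entSum (c • X) = |c| * entSum X := by
  unfold entSum
  simp [Finset.mul_sum, abs_mul]

lemma entSum_transpose {m n : ℕ} (M : Matrix (Fin m) (Fin n) ℝ) :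
    entSum Mᵀ = entSum M := by
  unfold entSum
  rw [Finset.sum_comm]
  simp [transpose_apply]

lemma entSum_neg {m n : ℕ} (M : Matrix (Fin m) (Fin n) ℝ) :
    entSum (-M) = entSum M := by
  unfold entSum; simp

lemma entSum_mskew {d : ℕ} (M : Matrix (Fin d) (Fin d) ℝ) :
    entSum (mskew M) ≤ entSum M := by
  unfold mskew
  rw [sub_eq_add_neg, entSum_smul]
  have h := entSum_add M (-Mᵀ)
  rw [entSum_neg, entSum_transpose] at h
  have h0 : (0:ℝ) ≤ entSum M := by
    unfold entSum; positivity
  calc |((1:ℝ)/2)| * entSum (M + -Mᵀ) ≤ (1/2) * (entSum M + entSum M) := by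
        rw [abs_of_nonneg (by norm_num : (0:ℝ) ≤ (1:ℝ)/2)]
        nlinarith
    _ = entSum M := by ring

lemma le_csup_fin {n : ℕ} (f : Fin n → ℝ) (i : Fin n) : f i ≤ ⨆ j, f j :=
  le_ciSup (Set.Finite.bddAbove (Set.finite_range f)) i

lemma entSum_std_mul {m d n : ℕ} (i : Fin m) (j : Fin d)
    (A : Matrix (Fin d) (Fin n) ℝ) :
    entSum (single i j (1:ℝ) * A) = ∑ q, |A j q| := by
  unfold entSum
  have h : ∀ p q, (single i j (1:ℝ) * A) p q
      = if p = i then A j q else 0 := by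
    intro p q
    simp [mul_apply, single, ite_and]
    by_cases hp : p = i <;> simp [hp]
    exact fun h => absurd h.symm hp
  simp only [h]
  rw [Finset.sum_eq_single i]
  · simp
  · intro b _ hb; simp [hb]
  · simp

lemma entSum_mul_std {m d p' : ℕ} (R : Matrix (Fin m) (Fin d) ℝ)
    (i : Fin d) (j : Fin p') :
    entSum (R * single i j (1:ℝ)) = ∑ p, |R p i| := by
  unfold entSum
  have h : ∀ p q, (R * single i j (1:ℝ)) p q
      = if q = j then R p i else 0 := by
    intro p q
    simp [mul_apply, single, ite_and]
    by_cases hq : q = j <;> simp [hq]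
    exact fun h => absurd h.symm hq
  simp only [h]
  refine Finset.sum_congr rfl fun p _ => ?_
  rw [Finset.sum_eq_single j]
  · simp
  · intro b _ hb; simp [hb]
  · simp

/-- The 1-norm of `P^bal` with respect to the standard entrywise basis is bounded by
`max(n_A, n_R)` with `n_A = max_j(√α Σᵢ |r_{ij}| + |4α−1|‖A‖₁)` and
`n_R = max_j(α Σᵢ |a_{ij}| + √α ‖R‖_∞)`. -/
theorem stiefelPbal_one_norm_bound (d k : ℕ) (α : ℝ) (hα : 0 < α)
    (A : Matrix (Fin d) (Fin d) ℝ) (hA : Aᵀ = -A)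
    (R : Matrix (Fin k) (Fin d) ℝ)
    (normA1 nA nR : ℝ)
    (hnormA1 : normA1 = ⨆ j : Fin d, ∑ i : Fin d, |A i j|)
    (hnA : nA = ⨆ j : Fin d,
      (Real.sqrt α * ∑ i : Fin k, |R i j| + |4 * α - 1| * normA1))
    (hnR : nR = ⨆ j : Fin d,
      (α * ∑ i : Fin d, |A i j| + Real.sqrt α * (⨆ i : Fin k, ∑ j' : Fin d, |R i j'|))) :
    (∀ (i : Fin d) (j : Fin d),
        pairOneNorm (stiefelPbal α A R (single i j (1:ℝ), 0)) ≤ max nA nR) ∧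
      (∀ (i : Fin k) (j : Fin d),
        pairOneNorm (stiefelPbal α A R (0, single i j (1:ℝ))) ≤ max nA nR) := by
  have habs : ∀ p q : Fin d, |A p q| = |A q p| := by
    intro p q
    have : A q p = -A p q := by
      have := congrFun (congrFun hA p) q
      simpa [transpose_apply] using this
    rw [this, abs_neg]
  have hrowcol : ∀ j : Fin d, ∑ q, |A j q| = ∑ q, |A q j| := by
    intro j; exact Finset.sum_congr rfl fun q _ => habs j q
  have hsqrt : (0:ℝ) ≤ Real.sqrt α := Real.sqrt_nonneg α
  constructor
  · intro i j
    have key : pairOneNorm (stiefelPbal α A R (single i j (1:ℝ), 0))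
        ≤ Real.sqrt α * ∑ p, |R p i| + |4 * α - 1| * ∑ q, |A q j| := by
      unfold stiefelPbal pairOneNorm
      simp only
      have h2 : (∑ p, ∑ q, |(α • ((0 : Matrix (Fin k) (Fin d) ℝ) * A)
          - Real.sqrt α • (R * single i j (1:ℝ))) p q|)
          = Real.sqrt α * ∑ p, |R p i| := by
        have : α • ((0 : Matrix (Fin k) (Fin d) ℝ) * A)
            - Real.sqrt α • (R * single i j (1:ℝ))
            = -(Real.sqrt α • (R * single i j (1:ℝ))) := by
          simp
        rw [this]
        have := entSum_smul (Real.sqrt α) (R * single i j (1:ℝ))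
        rw [entSum_mul_std, abs_of_nonneg hsqrt] at this
        calc (∑ p, ∑ q, |(-(Real.sqrt α • (R * single i j (1:ℝ)))) p q|)
            = entSum (Real.sqrt α • (R * single i j (1:ℝ))) := entSum_neg _
          _ = Real.sqrt α * ∑ p, |R p i| := this
      have h1 : (∑ p, ∑ q, |(mskew ((4 * α - 1) • (single i j (1:ℝ) * A)
          + Real.sqrt α • (Rᵀ * (0 : Matrix (Fin k) (Fin d) ℝ)))) p q|)
          ≤ |4 * α - 1| * ∑ q, |A j q| := by
        have e : (4 * α - 1) • (single i j (1:ℝ) * A)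
            + Real.sqrt α • (Rᵀ * (0 : Matrix (Fin k) (Fin d) ℝ))
            = (4 * α - 1) • (single i j (1:ℝ) * A) := by simp
        rw [e]
        calc (∑ p, ∑ q, |(mskew ((4 * α - 1) • (single i j (1:ℝ) * A))) p q|)
            = entSum (mskew ((4 * α - 1) • (single i j (1:ℝ) * A))) := rfl
          _ ≤ entSum ((4 * α - 1) • (single i j (1:ℝ) * A)) := entSum_mskew _
          _ = |4 * α - 1| * ∑ q, |A j q| := by rw [entSum_smul, entSum_std_mul]
      rw [hrowcol j] at h1
      linarith
    refine le_trans key (le_trans ?_ (le_max_left _ _))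
    rw [hnA]
    have hle : Real.sqrt α * ∑ p, |R p i| + |4 * α - 1| * ∑ q, |A q j|
        ≤ Real.sqrt α * ∑ p, |R p i| + |4 * α - 1| * normA1 := by
      have : (∑ q, |A q j|) ≤ normA1 := by
        rw [hnormA1]
        exact le_csup_fin (fun j => ∑ q, |A q j|) j
      nlinarith [abs_nonneg (4 * α - 1)]
    exact le_trans hle (le_csup_fin
      (fun j => Real.sqrt α * ∑ p : Fin k, |R p j| + |4 * α - 1| * normA1) i)
  · intro i j
    have key : pairOneNorm (stiefelPbal α A R (0, single i j (1:ℝ)))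
        ≤ α * ∑ q, |A q j| + Real.sqrt α * ∑ q, |R i q| := by
      unfold stiefelPbal pairOneNorm
      simp only
      have h2 : (∑ p, ∑ q, |(α • (single i j (1:ℝ) * A)
          - Real.sqrt α • (R * (0 : Matrix (Fin d) (Fin d) ℝ))) p q|)
          = α * ∑ q, |A j q| := by
        have e : α • (single i j (1:ℝ) * A)
            - Real.sqrt α • (R * (0 : Matrix (Fin d) (Fin d) ℝ))
            = α • (single i j (1:ℝ) * A) := by simp
        rw [e]
        calc (∑ p, ∑ q, |(α • (single i j (1:ℝ) * A)) p q|)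
            = entSum (α • (single i j (1:ℝ) * A)) := rfl
          _ = α * ∑ q, |A j q| := by
              rw [entSum_smul, entSum_std_mul, abs_of_pos hα]
      have h1 : (∑ p, ∑ q, |(mskew ((4 * α - 1) • ((0 : Matrix (Fin d) (Fin d) ℝ) * A)
          + Real.sqrt α • (Rᵀ * single i j (1:ℝ)))) p q|)
          ≤ Real.sqrt α * ∑ q, |R i q| := by
        have e : (4 * α - 1) • ((0 : Matrix (Fin d) (Fin d) ℝ) * A)
            + Real.sqrt α • (Rᵀ * single i j (1:ℝ))
            = Real.sqrt α • (Rᵀ * single i j (1:ℝ)) := by simp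
        rw [e]
        calc (∑ p, ∑ q, |(mskew (Real.sqrt α • (Rᵀ * single i j (1:ℝ)))) p q|)
            = entSum (mskew (Real.sqrt α • (Rᵀ * single i j (1:ℝ)))) := rfl
          _ ≤ entSum (Real.sqrt α • (Rᵀ * single i j (1:ℝ))) := entSum_mskew _
          _ = Real.sqrt α * ∑ p, |Rᵀ p i| := by rw [entSum_smul, entSum_mul_std,
              abs_of_nonneg hsqrt]
          _ = Real.sqrt α * ∑ q, |R i q| := by simp [transpose_apply]
      rw [hrowcol j] at h2
      linarith
    refine le_trans key (le_trans ?_ (le_max_right _ _))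
    rw [hnR]
    have hle : α * ∑ q, |A q j| + Real.sqrt α * ∑ q, |R i q|
        ≤ α * ∑ q, |A q j| + Real.sqrt α * (⨆ i' : Fin k, ∑ q, |R i' q|) := by
      have : (∑ q, |R i q|) ≤ ⨆ i' : Fin k, ∑ q, |R i' q| :=
        le_csup_fin (fun i' => ∑ q, |R i' q|) i
      nlinarith
    exact le_trans hle (le_csup_fin
      (fun j => α * ∑ q : Fin d, |A q j|
        + Real.sqrt α * (⨆ i' : Fin k, ∑ q : Fin d, |R i' q|)) j)
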